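/- Let A be an associative algebra, D : A → A a derivation, and X ∈ A such that [X, D(X)] = C where C commutes with X. Then for every natural number n, D(X^n) = n·D(X)·X^(n-1) + (n(n−1)/2)·C·X^(n−2). -/

import Mathlib

/-- If `D` is a derivation of an associative algebra `A` and
`[X, D X] = C` with `C` commuting with `X`, then
`D (X^n) = n • D X * X^(n-1) + (n(n-1)/2) • C * X^(n-2)`. -/
theorem derivation_pow_right (A : Type*) [Ring A] (D : A → A)
    (hadd : ∀ x y : A, D (x + y) = D x + D y)
    (hleib : ∀ x y : A, D (x * y) = D x * y + x * D y)
    (X C : A) (hC : X * D X - D X * X = C) (hXC : C * X = X * C) (n : ℕ) :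
    D (X ^ n) = n • (D X * X ^ (n - 1)) + (n * (n - 1) / 2) • (C * X ^ (n - 2)) := by
  have hD1 : D 1 = 0 := by
    have h := hleib 1 1
    simp only [one_mul, mul_one] at h
    exact left_eq_add.mp h
  have hcom : X * D X = C + D X * X := by
    rw [← hC]; abel
  induction n with
  | zero => simpa using hD1
  | succ k ih =>
    match k, ih with
    | 0, _ => simp
    | 1, _ =>
      have h2 : D (X ^ 2) = D (X * X) := by rw [sq]
      rw [h2, hleib, hcom]
      simp [two_smul]
      abel
    | (m+2), ih =>
      have h1 : X ^ (m + 3) = X * X ^ (m + 2) := pow_succ' X (m+2)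
      rw [h1, hleib, ih]
      simp only [Nat.add_sub_cancel, Nat.succ_sub_one, show m + 2 - 2 = m from rfl,
        show m + 3 - 1 = m + 2 from rfl, show m + 3 - 2 = m + 1 from rfl]
      rw [mul_add, mul_smul_comm, mul_smul_comm]
      rw [show X * (D X * X ^ (m+1)) = (X * D X) * X ^ (m+1) from (mul_assoc ..).symm, hcom,
        add_mul, show D X * X * X ^ (m+1) = D X * X ^ (m+2) by
          rw [mul_assoc, ← pow_succ']]
      rw [show X * (C * X ^ m) = C * X ^ (m+1) by
        rw [← mul_assoc, ← hXC, mul_assoc, ← pow_succ']]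
      have hc : (m + 2) * (m + 1) / 2 + (m + 2) = (m + 3) * (m + 2) / 2 := by
        have e1 : (m + 2) * (m + 1) / 2 = (m + 2).choose 2 := by
          simp [Nat.choose_two_right]
        have e2 : (m + 3) * (m + 2) / 2 = (m + 3).choose 2 := by
          simp [Nat.choose_two_right]
        have e3 : (m + 3).choose 2 = (m + 2) + (m + 2).choose 2 := by
          rw [Nat.choose_succ_succ, Nat.choose_one_right]
        omega
      rw [← hc, add_smul, add_smul]
      simp only [smul_add, add_smul]
      abel
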